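/- Let n ≥ 2, let H be a closed subspace of a complex Hilbert space K, and let V_1,…,V_n be commuting bounded operators on K such that V_n is an isometry, V_j = V_{n−j}^* V_n for j = 1,…,n−1, and H is invariant under each adjoint V_j^*. Define S_j := P_H V_j|_H, let D := (I_H − S_n^* S_n)^{1/2}, and let Q be the orthogonal projection of H onto (ker D)^⊥. Suppose E_1,…,E_{n−1} are bounded operators on H satisfying E_j = Q E_j Q, S_j − S_{n−j}^* S_n = D E_j D, and moreover the relations D S_j = E_j D + E_{n−j}^* D S_n for j = 1,…,n−1. Then for every i = 1,…,n−1 and every x ∈ ker D one has (E_i^* E_{n−i}^* − E_{n−i}^* E_i^*) D S_n x = 0; that is, the operator (E_i^* E_{n−i}^* − E_{n−i}^* E_i^*) D S_n vanishes on ker D. -/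

import Mathlib

open ContinuousLinearMap

set_option maxHeartbeats 2000000 in
/-- Let `n ≥ 2` and let `(V₁,…,Vₙ)` be a commuting tuple on `K` with `Vₙ` an isometry,
`Vⱼ = V_{n−j}* Vₙ` and `H` invariant under each `Vⱼ*`.  With `Sⱼ = P_H Vⱼ|_H`, `D` the positive
square root of `I − Sₙ* Sₙ`, `Q` the orthogonal projection of `H` onto `(ker D)ᗮ`, and
`E₁,…,E_{n−1}` operators with `Eⱼ = Q Eⱼ Q`, `Sⱼ − S_{n−j}* Sₙ = D Eⱼ D` and
`D Sⱼ = Eⱼ D + E_{n−j}* D Sₙ`, the operator `(Eᵢ* E_{n−i}* − E_{n−i}* Eᵢ*) D Sₙ` vanishes on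
`ker D` for `i = 1,…,n−1`. -/
theorem stmt_4 {K : Type*} [NormedAddCommGroup K] [InnerProductSpace ℂ K] [CompleteSpace K]
    (Hs : Submodule ℂ K) [CompleteSpace Hs]
    (n : ℕ) (hn : 2 ≤ n)
    (V : ℕ → (K →L[ℂ] K))
    (hVcomm : ∀ i j, 1 ≤ i → i ≤ n → 1 ≤ j → j ≤ n → V i * V j = V j * V i)
    (hViso : ∀ x : K, ‖V n x‖ = ‖x‖)
    (hVrel : ∀ j, 1 ≤ j → j ≤ n - 1 → V j = adjoint (V (n - j)) * V n)
    (hinv : ∀ j, 1 ≤ j → j ≤ n → ∀ h : Hs, adjoint (V j) (h : K) ∈ Hs)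
    (S : ℕ → (Hs →L[ℂ] Hs))
    (hS : ∀ j, 1 ≤ j → j ≤ n →
      S j = Hs.orthogonalProjectionOnto.comp ((V j).comp Hs.subtypeL))
    (D : Hs →L[ℂ] Hs)
    (hDpos : D.IsPositive)
    (hDsq : D * D = 1 - adjoint (S n) * S n)
    (Q : Hs →L[ℂ] Hs)
    -- `Q` is the orthogonal projection of `H` onto `(ker D)ᗮ`: the self-adjoint idempotent
    -- with range `(ker D)ᗮ`
    (hQidem : Q * Q = Q) (hQsa : IsSelfAdjoint Q)
    (hQran : LinearMap.range (Q : Hs →ₗ[ℂ] Hs) = (LinearMap.ker (D : Hs →ₗ[ℂ] Hs))ᗮ)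
    (E : ℕ → (Hs →L[ℂ] Hs))
    (hEQ : ∀ j, 1 ≤ j → j ≤ n - 1 → E j = Q * E j * Q)
    (hE : ∀ j, 1 ≤ j → j ≤ n - 1 → S j - adjoint (S (n - j)) * S n = D * E j * D)
    (hfund : ∀ j, 1 ≤ j → j ≤ n - 1 →
      D * S j = E j * D + adjoint (E (n - j)) * D * S n) :
    ∀ i, 1 ≤ i → i ≤ n - 1 → ∀ x : Hs, D x = 0 →
      (adjoint (E i) * adjoint (E (n - i)) - adjoint (E (n - i)) * adjoint (E i))
        (D (S n x)) = 0 := by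

  -- `Hsᗮ` is invariant under each `V k`, since `Hs` is invariant under each `(V k)*`
  have hP0 : ∀ k, 1 ≤ k → k ≤ n → ∀ y : K, y ∈ Hsᗮ →
      Hs.orthogonalProjectionOnto (V k y) = 0 := by
    intro k hk1 hk2 y hy
    apply Submodule.orthogonalProjectionOnto_apply_of_mem_orthogonal
    rw [Submodule.mem_orthogonal]
    intro u hu
    rw [← ContinuousLinearMap.adjoint_inner_left]
    exact (Submodule.mem_orthogonal Hs y).mp hy _ (hinv k hk1 hk2 ⟨u, hu⟩)
  have hPV : ∀ k, 1 ≤ k → k ≤ n → ∀ y : K,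
      Hs.orthogonalProjectionOnto (V k y)
        = Hs.orthogonalProjectionOnto (V k (Hs.orthogonalProjectionOnto y : K)) := by
    intro k hk1 hk2 y
    have h1 : Hs.orthogonalProjectionOnto (V k (y - (Hs.orthogonalProjectionOnto y : K))) = 0 :=
      hP0 k hk1 hk2 _ (Submodule.sub_starProjection_mem_orthogonal y)
    rw [map_sub (V k), map_sub (Hs.orthogonalProjectionOnto)] at h1
    exact (sub_eq_zero.mp h1)
  -- the compressions commute
  have hSc : ∀ a b, 1 ≤ a → a ≤ n → 1 ≤ b → b ≤ n → S a * S b = S b * S a := by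
    intro a b ha1 ha2 hb1 hb2
    have e : ∀ c d, 1 ≤ c → c ≤ n → 1 ≤ d → d ≤ n → ∀ z : Hs,
        (S c * S d) z = Hs.orthogonalProjectionOnto (V c (V d (z : K))) := by
      intro c d hc1 hc2 hd1 hd2 z
      rw [mul_apply_eq_comp, hS c hc1 hc2, hS d hd1 hd2]
      simp only [comp_apply, Submodule.subtypeL_apply]
      exact (hPV c hc1 hc2 _).symm
    ext z
    rw [e a b ha1 ha2 hb1 hb2 z, e b a hb1 hb2 ha1 ha2 z]
    have h := congrArg (fun T => T (z : K)) (hVcomm a b ha1 ha2 hb1 hb2)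
    simp only [mul_apply_eq_comp] at h
    rw [h]
  have aC : ∀ A B : Hs →L[ℂ] Hs, adjoint (A * B) = adjoint B * adjoint A :=
    fun A B => ContinuousLinearMap.adjoint_comp A B
  have aA : ∀ A B : Hs →L[ℂ] Hs, adjoint (A + B) = adjoint A + adjoint B :=
    fun A B => map_add (ContinuousLinearMap.adjoint :
      (Hs →L[ℂ] Hs) ≃ₗᵢ⋆[ℂ] (Hs →L[ℂ] Hs)) A B
  have aS : ∀ A B : Hs →L[ℂ] Hs, adjoint (A - B) = adjoint A - adjoint B :=
    fun A B => map_sub (ContinuousLinearMap.adjoint :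
      (Hs →L[ℂ] Hs) ≃ₗᵢ⋆[ℂ] (Hs →L[ℂ] Hs)) A B
  have hDsa : adjoint D = D := ContinuousLinearMap.isSelfAdjoint_iff'.mp hDpos.isSelfAdjoint
  have hScadj : ∀ a b, 1 ≤ a → a ≤ n → 1 ≤ b → b ≤ n →
      adjoint (S a) * adjoint (S b) = adjoint (S b) * adjoint (S a) := by
    intro a b ha1 ha2 hb1 hb2
    have h := congrArg adjoint (hSc b a hb1 hb2 ha1 ha2)
    rw [aC, aC] at h
    exact h
  intro i hi1 hi2 x hx
  have hin : i ≤ n := by omega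
  set j := n - i with hj
  have hj1 : 1 ≤ j := by omega
  have hj2 : j ≤ n - 1 := by omega
  have hji : n - j = i := by omega
  have hjn : j ≤ n := by omega
  have hn1 : 1 ≤ n := by omega
  -- main computation
  have key : ∀ a b : ℕ, 1 ≤ a → a ≤ n - 1 → 1 ≤ b → b ≤ n - 1 → n - a = b → n - b = a →
      D (adjoint (E a) (adjoint (E b) (D (S n x))))
        = adjoint (S a) (S a x) - adjoint (S n) (S b (S a x)) := by
    intro a b ha1 ha2 hb1 hb2 hab hba
    have han : a ≤ n := by omega
    have hbn : b ≤ n := by omega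
    have hfa := hfund a ha1 ha2
    rw [hab] at hfa
    have hfb := hfund b hb1 hb2
    rw [hba] at hfb
    have hEa := hE a ha1 ha2
    rw [hab] at hEa
    have k1 : adjoint (E b) (D (S n x)) = D (S a x) := by
      have h := congrArg (fun T => T x) hfa
      simp only [mul_apply_eq_comp, add_apply] at h
      rw [hx, map_zero, zero_add] at h
      exact h.symm
    have k2v : ∀ y, D (adjoint (E a) y)
        = adjoint (S a) (D y) - adjoint (S n) (D (E b y)) := by
      have h := congrArg adjoint hfa
      simp only [aC, aA, adjoint_adjoint, hDsa] at h
      intro y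
      have h2 := congrArg (fun T => T y) h
      simp only [mul_apply_eq_comp, add_apply] at h2
      exact eq_sub_of_add_eq h2.symm
    have k3v : ∀ y, E b (D y) = D (S b y) - adjoint (E a) (D (S n y)) := by
      intro y
      have h := congrArg (fun T => T y) hfb
      simp only [mul_apply_eq_comp, add_apply] at h
      exact eq_sub_of_add_eq h.symm
    have k4v : ∀ y, D (adjoint (E a) (D y))
        = adjoint (S a) y - adjoint (S n) (S b y) := by
      have h := congrArg adjoint hEa
      simp only [aS, aC, adjoint_adjoint, hDsa] at h
      intro y
      have h2 := congrArg (fun T => T y) h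
      simp only [mul_apply_eq_comp, sub_apply] at h2
      exact h2.symm
    have k5v : ∀ y, D (D y) = y - adjoint (S n) (S n y) := by
      intro y
      have h := congrArg (fun T => T y) hDsq
      simpa only [mul_apply_eq_comp, sub_apply, one_apply_eq_self] using h
    have cAdj : adjoint (S a) (adjoint (S n) (S n (S a x)))
        = adjoint (S n) (adjoint (S a) (S n (S a x))) := by
      have h := congrArg (fun T => T (S n (S a x))) (hScadj a n ha1 han hn1 le_rfl)
      simpa only [mul_apply_eq_comp] using h
    have cSnb : S n (S b (S a x)) = S b (S n (S a x)) := by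
      have h := congrArg (fun T => T (S a x)) (hSc n b hn1 le_rfl hb1 hbn)
      simpa only [mul_apply_eq_comp] using h
    rw [k1, k2v (D (S a x)), k5v (S a x), k3v (S a x), map_sub D, k5v (S b (S a x)),
      k4v (S n (S a x))]
    simp only [map_sub]
    rw [cAdj, cSnb]
    abel
  have key1 := key i j hi1 hi2 hj1 hj2 hj.symm hji
  have key2 := key j i hj1 hj2 hi1 hi2 hji hj.symm
  have f3 : ∀ a b, 1 ≤ a → a ≤ n - 1 → n - a = b → S a x = adjoint (S b) (S n x) := by
    intro a b ha1 ha2 hab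
    have h := hE a ha1 ha2
    rw [hab] at h
    have h2 := congrArg (fun T => T x) h
    simp only [mul_apply_eq_comp, sub_apply] at h2
    rw [hx, map_zero, map_zero] at h2
    exact sub_eq_zero.mp h2
  have hDg : D (adjoint (E i) (adjoint (E j) (D (S n x)))
      - adjoint (E j) (adjoint (E i) (D (S n x)))) = 0 := by
    rw [map_sub, key1, key2]
    have c1 : S j (S i x) = S i (S j x) := by
      have h := congrArg (fun T => T x) (hSc j i hj1 hjn hi1 hin)
      simpa only [mul_apply_eq_comp] using h
    have c2 : adjoint (S i) (S i x) = adjoint (S j) (S j x) := by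
      rw [f3 i j hi1 hi2 hj.symm, f3 j i hj1 hj2 hji]
      have h := congrArg (fun T => T (S n x)) (hScadj i j hi1 hin hj1 hjn)
      simpa only [mul_apply_eq_comp] using h
    rw [c1, c2]
    abel
  have hQadj : adjoint Q = Q := ContinuousLinearMap.isSelfAdjoint_iff'.mp hQsa
  have hQQ : ∀ z, Q (Q z) = Q z := by
    intro z
    have h := congrArg (fun T => T z) hQidem
    simpa only [mul_apply_eq_comp] using h
  have hQE : ∀ k, 1 ≤ k → k ≤ n - 1 → ∀ y, Q (adjoint (E k) y) = adjoint (E k) y := by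
    intro k hk1 hk2 y
    have h := congrArg adjoint (hEQ k hk1 hk2)
    simp only [aC, hQadj] at h
    rw [h]
    simp only [mul_apply_eq_comp]
    rw [hQQ]
  have hQg : Q (adjoint (E i) (adjoint (E j) (D (S n x)))
      - adjoint (E j) (adjoint (E i) (D (S n x))))
      = adjoint (E i) (adjoint (E j) (D (S n x)))
      - adjoint (E j) (adjoint (E i) (D (S n x))) := by
    rw [map_sub, hQE i hi1 hi2, hQE j hj1 hj2]
  set g := adjoint (E i) (adjoint (E j) (D (S n x)))
      - adjoint (E j) (adjoint (E i) (D (S n x))) with hgdef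
  have hmem : g ∈ (LinearMap.ker (D : Hs →ₗ[ℂ] Hs))ᗮ := by
    rw [← hQran]
    exact ⟨g, hQg⟩
  have hker : g ∈ LinearMap.ker (D : Hs →ₗ[ℂ] Hs) := LinearMap.mem_ker.mpr hDg
  have hg0 : g = 0 :=
    inner_self_eq_zero.mp ((Submodule.mem_orthogonal _ g).mp hmem g hker)
  show (adjoint (E i) * adjoint (E j) - adjoint (E j) * adjoint (E i)) (D (S n x)) = 0
  simp only [sub_apply, mul_apply_eq_comp]
  exact hg0
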